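/- arXiv:1506.04856 — 2 statements merged into one kernel-verified Lean document; each statement's English description precedes it below -/
import Mathlib

section
/- Let d ≥ 1, p > 0 and −∞ < β < α < 2. Then Ψ_{α,p} = 𝔗_{β→α,p} ∘ Ψ_{β,p}: the domains coincide, i.e. 𝔇(Ψ_{α,p}) = {M ∈ 𝔇(Ψ_{β,p}) : Ψ_{β,p}M ∈ 𝔇(𝔗_{β→α,p})}, and for every M in this common domain one has 𝔗_{β→α,p}(Ψ_{β,p} M) = Ψ_{α,p} M as measures on ℝ^d. -/
open MeasureTheory Set

noncomputable section

variable {E : Type*} [NormedAddCommGroup E] [NormedSpace ℝ E]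
  [MeasurableSpace E] [BorelSpace E]

/-- The upsilon transform with dilation measure `ρ` on `(0,∞) ⊆ ℝ`:
`[Υ_ρ M](B) = ∫ M(s⁻¹ B) ρ(ds)`, realized as the image of `ρ ⊗ M` under `(s, x) ↦ s • x`. -/
def Upsilon (ρ : Measure ℝ) (M : Measure E) : Measure E :=
  Measure.map (fun sx : ℝ × E => sx.1 • sx.2) (ρ.prod M)

/-- `M` is a Lévy measure: σ-finite, no mass at `0`, and `∫ (|x|² ∧ 1) M(dx) < ∞`. -/
def IsLevyMeasure (M : Measure E) : Prop :=
  SigmaFinite M ∧ M {0} = 0 ∧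
    ∫⁻ x, ENNReal.ofReal (min (‖x‖ ^ 2) 1) ∂M < ⊤

/-- The domain `𝔇(Υ_ρ)`: Lévy measures `M` such that `Υ_ρ M` is again a Lévy measure. -/
def UpsilonDomain (ρ : Measure ℝ) : Set (Measure E) :=
  {M | IsLevyMeasure M ∧ IsLevyMeasure (Upsilon ρ M)}

/-- The range `ℜ(Υ_ρ) = {Υ_ρ M : M ∈ 𝔇(Υ_ρ)}`. -/
def UpsilonRange (ρ : Measure ℝ) : Set (Measure E) :=
  Upsilon ρ '' UpsilonDomain (E := E) ρ

/-- The class `𝔐^α`: Borel measures with `M({0}) = 0` and `∫ (|x|² ∧ |x|^α) M(dx) < ∞`. -/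
def MemMAlpha (α : ℝ) (M : Measure E) : Prop :=
  M {0} = 0 ∧ ∫⁻ x, ENNReal.ofReal (min (‖x‖ ^ 2) (‖x‖ ^ α)) ∂M < ⊤

/-- The class `𝔐^log`: Lévy measures with `∫_{|x|>1} log|x| M(dx) < ∞`. -/
def MemMLog (M : Measure E) : Prop :=
  IsLevyMeasure M ∧
    ∫⁻ x in {x : E | 1 < ‖x‖}, ENNReal.ofReal (Real.log ‖x‖) ∂M < ⊤

/-- The dilation measure `ψ_{α,p}(ds) = s^{-α-1} e^{-s^p} 1_{s>0} ds`. -/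
def psiMeasure (α p : ℝ) : Measure ℝ :=
  (volume : Measure ℝ).withDensity fun s =>
    if 0 < s then ENNReal.ofReal (s ^ (-α - 1) * Real.exp (-(s ^ p))) else 0

/-- `K_{α,β,p} = ∫₀^∞ u^{α-β-1} e^{-u^p} du`. -/
def Kconst (α β p : ℝ) : ℝ :=
  ∫ u in Ioi (0 : ℝ), u ^ (α - β - 1) * Real.exp (-(u ^ p))

/-- The dilation measure
`τ_{β→α,p}(ds) = K_{α,β,p}⁻¹ s^{-α-1} (1-s^p)^{(α-β)/p - 1} 1_{0<s<1} ds`. -/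
def tauMeasure (β α p : ℝ) : Measure ℝ :=
  (volume : Measure ℝ).withDensity fun s =>
    if 0 < s ∧ s < 1 then
      ENNReal.ofReal ((Kconst α β p)⁻¹ * (s ^ (-α - 1) * (1 - s ^ p) ^ ((α - β) / p - 1)))
    else 0

/-- `f` is the density of the fully right-skewed `r`-stable distribution on `(0,∞)`:
a nonnegative measurable function with `∫₀^∞ e^{-t x} f(x) dx = e^{-t^r}` for all `t ≥ 0`. -/
def IsStableDensity (r : ℝ) (f : ℝ → ℝ) : Prop :=
  Measurable f ∧ (∀ x, 0 ≤ f x) ∧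
    ∀ t : ℝ, 0 ≤ t →
      ∫ x in Ioi (0 : ℝ), Real.exp (-(t * x)) * f x = Real.exp (-(t ^ r))

/-- The dilation measure `π_{α,p→q}(ds) = p f_{q/p}(s^{-p}) s^{-α-p-1} 1_{s>0} ds`,
where `f` is (to be assumed) the density of the fully right-skewed `q/p`-stable law. -/
def piMeasure (f : ℝ → ℝ) (α p : ℝ) : Measure ℝ :=
  (volume : Measure ℝ).withDensity fun s =>
    if 0 < s then ENNReal.ofReal (p * f (s ^ (-p)) * s ^ (-α - p - 1)) else 0

/-- The measure `ρ(ds) = g(s) 1_{s>0} ds`. -/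
def densMeasure (g : ℝ → ℝ) : Measure ℝ :=
  (volume : Measure ℝ).withDensity fun s => if 0 < s then ENNReal.ofReal (g s) else 0


section AuxLemmas
open Real
open scoped ENNReal

variable {E : Type*} [NormedAddCommGroup E] [NormedSpace ℝ E]
  [MeasurableSpace E] [BorelSpace E]
set_option linter.unusedSectionVars false

lemma aux_intOn {s p : ℝ} (hs : -1 < s) (hp : 0 < p) :
    IntegrableOn (fun x : ℝ => x ^ s * Real.exp (-(x ^ p))) (Ioi 0) := by
  have h0 : IntegrableOn (fun y : ℝ => y ^ ((s+1)/p - 1) * Real.exp (-y)) (Ioi (0:ℝ)) := by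
    have h1 := Real.GammaIntegral_convergent (s := (s+1)/p) (div_pos (by linarith) hp)
    exact h1.congr_fun (fun x hx => by ring) measurableSet_Ioi
  have h := (integrableOn_Ioi_comp_rpow_iff
      (fun y : ℝ => y ^ ((s+1)/p - 1) * Real.exp (-y)) hp.ne').mpr h0
  have h2 : IntegrableOn (fun x : ℝ =>
      |p|⁻¹ * ((|p| * x ^ (p - 1)) • ((x ^ p) ^ ((s+1)/p - 1) * Real.exp (-(x ^ p))))) (Ioi 0) :=
    h.const_mul _
  refine h2.congr_fun (fun x hx => ?_) measurableSet_Ioi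
  have hx0 : (0:ℝ) < x := hx
  have e1 : (x ^ p) ^ ((s+1)/p - 1) = x ^ (s + 1 - p) := by
    rw [← rpow_mul hx0.le]; congr 1; field_simp
  beta_reduce
  rw [e1, smul_eq_mul]
  have e2 : x ^ (p - 1) * (x ^ (s + 1 - p) * Real.exp (-(x ^ p)))
      = x ^ s * Real.exp (-(x ^ p)) := by
    rw [← mul_assoc, ← rpow_add hx0]; ring_nf
  have hpne : |p| ≠ 0 := by positivity
  field_simp
  rw [← rpow_add hx0]; ring_nf



lemma measurable_smul2 : Measurable (fun sx : ℝ × E => sx.1 • sx.2) :=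
  (continuous_fst.smul continuous_snd).measurable

lemma upsilon_comp (ρ₁ ρ₂ : Measure ℝ) [SFinite ρ₁] [SFinite ρ₂] (M : Measure E) [SFinite M] :
    Upsilon ρ₂ (Upsilon ρ₁ M)
      = Upsilon (Measure.map (fun q : ℝ × ℝ => q.1 * q.2) (ρ₂.prod ρ₁)) M := by
  have hφ : Measurable (fun sx : ℝ × E => sx.1 • sx.2) := measurable_smul2
  have hmul : Measurable (fun q : ℝ × ℝ => q.1 * q.2) := measurable_fst.mul measurable_snd
  unfold Upsilon
  rw [show ρ₂.prod (Measure.map (fun sx : ℝ × E => sx.1 • sx.2) (ρ₁.prod M))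
      = Measure.map (Prod.map id (fun sx : ℝ × E => sx.1 • sx.2)) (ρ₂.prod (ρ₁.prod M)) by
    rw [← Measure.map_prod_map _ _ measurable_id hφ, Measure.map_id]]
  rw [show (Measure.map (fun q : ℝ × ℝ => q.1 * q.2) (ρ₂.prod ρ₁)).prod M
      = Measure.map (Prod.map (fun q : ℝ × ℝ => q.1 * q.2) id) ((ρ₂.prod ρ₁).prod M) by
    rw [← Measure.map_prod_map _ _ hmul measurable_id, Measure.map_id]]
  rw [Measure.map_map hφ (measurable_id.prodMap hφ),
      Measure.map_map hφ (hmul.prodMap measurable_id)]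
  rw [← Measure.prodAssoc_prod, Measure.map_map (hφ.comp (measurable_id.prodMap hφ))
      MeasurableEquiv.prodAssoc.measurable]
  congr 1
  ext ⟨⟨s, t⟩, x⟩
  simp [MeasurableEquiv.prodAssoc, Prod.map, smul_smul]

lemma map_mul_prod (g h : ℝ → ℝ≥0∞) (hg : Measurable g) (hh : Measurable h)
    (hg0 : ∀ s ≤ 0, g s = 0) (hgt : ∀ s, g s ≠ ⊤) :
    Measure.map (fun q : ℝ × ℝ => q.1 * q.2)
        ((volume.withDensity g).prod (volume.withDensity h))
      = volume.withDensity
          (fun u => ∫⁻ s in Ioi (0:ℝ), g s * ENNReal.ofReal s⁻¹ * h (u / s)) := by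
  have hmul : Measurable (fun q : ℝ × ℝ => q.1 * q.2) := measurable_fst.mul measurable_snd
  ext A hA
  rw [Measure.map_apply hmul hA, Measure.prod_apply (hmul hA),
    lintegral_withDensity_eq_lintegral_mul _ hg
      (measurable_measure_prodMk_left (hmul hA)), withDensity_apply _ hA]
  -- LHS : ∫⁻ s, g s * (volume.withDensity h) {t | s * t ∈ A} ∂volume
  have key : ∀ s : ℝ, 0 < s →
      (volume.withDensity h) (Prod.mk s ⁻¹' ((fun q : ℝ × ℝ => q.1 * q.2) ⁻¹' A))
        = ENNReal.ofReal s⁻¹ * ∫⁻ u, A.indicator (fun u => h (u / s)) u := by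
    intro s hs
    have hS : MeasurableSet (Prod.mk s ⁻¹' ((fun q : ℝ × ℝ => q.1 * q.2) ⁻¹' A)) :=
      measurable_prodMk_left (hmul hA)
    rw [withDensity_apply _ hS, ← lintegral_indicator hS]
    have hH : Measurable (fun u => A.indicator (fun u => h (u / s)) u) :=
      (hh.comp (measurable_id.div_const s)).indicator hA
    have hmv := lintegral_map (μ := volume) hH (measurable_const_mul s)
    rw [Real.map_volume_mul_left hs.ne', lintegral_smul_measure,
      abs_of_pos (inv_pos.mpr hs)] at hmv
    have heq : ∀ t : ℝ, (Prod.mk s ⁻¹' ((fun q : ℝ × ℝ => q.1 * q.2) ⁻¹' A)).indicator h t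
        = A.indicator (fun u => h (u / s)) (s * t) := by
      intro t
      by_cases ht : s * t ∈ A
      · rw [Set.indicator_of_mem ht, Set.indicator_of_mem (show t ∈ Prod.mk s ⁻¹' ((fun q : ℝ × ℝ => q.1 * q.2) ⁻¹' A) from ht),
          mul_div_cancel_left₀ _ hs.ne']
      · rw [Set.indicator_of_notMem ht, Set.indicator_of_notMem (show t ∉ Prod.mk s ⁻¹' ((fun q : ℝ × ℝ => q.1 * q.2) ⁻¹' A) from ht)]
    simp_rw [heq]
    exact hmv.symm
  -- replace integrand
  calc ∫⁻ s, g s * (volume.withDensity h) (Prod.mk s ⁻¹' ((fun q : ℝ × ℝ => q.1 * q.2) ⁻¹' A)) ∂volume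
      = ∫⁻ s, (Ioi (0:ℝ)).indicator
          (fun s => ∫⁻ u, A.indicator (fun u => g s * ENNReal.ofReal s⁻¹ * h (u / s)) u) s
          ∂volume := by
        congr 1; ext s
        by_cases hs : 0 < s
        · rw [Set.indicator_apply, if_pos (mem_Ioi.mpr hs), key s hs]
          rw [← mul_assoc, ← lintegral_const_mul' (g s * ENNReal.ofReal s⁻¹) _
            (ENNReal.mul_ne_top (hgt s) ENNReal.ofReal_ne_top)]
          congr 1; ext u
          by_cases hu : u ∈ A <;> simp [Set.indicator_apply, hu]
        · rw [Set.indicator_apply, if_neg (fun hc => hs (mem_Ioi.mp hc)), hg0 s (not_lt.mp hs), zero_mul]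
  _ = ∫⁻ s in Ioi (0:ℝ), ∫⁻ u, A.indicator (fun u => g s * ENNReal.ofReal s⁻¹ * h (u / s)) u ∂volume ∂volume := by
        rw [lintegral_indicator measurableSet_Ioi]
  _ = ∫⁻ u in A, ∫⁻ s in Ioi (0:ℝ), g s * ENNReal.ofReal s⁻¹ * h (u / s) ∂volume ∂volume := by
        rw [lintegral_lintegral_swap]
        · rw [← lintegral_indicator hA]
          congr 1; ext u
          by_cases hu : u ∈ A
          · rw [indicator_of_mem hu]
            congr 1; ext s; rw [indicator_of_mem hu]
          · rw [indicator_of_notMem hu]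
            simp only [indicator_of_notMem hu, lintegral_zero]
        · apply Measurable.aemeasurable
          apply Measurable.indicator
          · exact ((hg.comp measurable_fst).mul
              (ENNReal.measurable_ofReal.comp (measurable_fst.inv))).mul
              (hh.comp (measurable_snd.div measurable_fst))
          · exact measurable_snd hA


lemma pointwise_id {β α p u y K : ℝ} (hp : 0 < p) (hu : 0 < u) (hy : 0 < y) :
    |(-(1/p)) * (1+y) ^ (-(1/p) - 1)| *
      ((K⁻¹ * (((1+y) ^ (-(1/p))) ^ (-α - 1)
          * (1 - ((1+y) ^ (-(1/p))) ^ p) ^ ((α - β) / p - 1)))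
        * ((1+y) ^ (-(1/p)))⁻¹
        * ((u / ((1+y) ^ (-(1/p)))) ^ (-β - 1)
          * Real.exp (-((u / ((1+y) ^ (-(1/p)))) ^ p))))
    = K⁻¹ * p⁻¹ * (u ^ (-β - 1) * Real.exp (-(u ^ p)))
        * (y ^ ((α - β) / p - 1) * Real.exp (-(u ^ p) * y)) := by
  have ht0 : (0:ℝ) < 1 + y := by linarith
  have habs : |(-(1/p)) * (1+y) ^ (-(1/p) - 1)| = p⁻¹ * (1+y) ^ (-(1/p) - 1) := by
    rw [abs_mul, abs_neg, abs_of_pos (by positivity), abs_of_nonneg (rpow_nonneg ht0.le _)]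
    norm_num
  have h1 : ((1+y) ^ (-(1/p))) ^ (-α - 1) = (1+y) ^ ((α + 1)/p) := by
    rw [← rpow_mul ht0.le]; congr 1; field_simp; ring
  have h2 : ((1+y) ^ (-(1/p))) ^ p = (1+y)⁻¹ := by
    rw [← rpow_mul ht0.le, show -(1/p) * p = -1 by field_simp, rpow_neg_one]
  have h3 : 1 - ((1+y) ^ (-(1/p))) ^ p = y / (1+y) := by
    rw [h2]; field_simp; ring
  have h4 : (1 - ((1+y) ^ (-(1/p))) ^ p) ^ ((α - β)/p - 1)
      = y ^ ((α - β)/p - 1) * (1+y) ^ (-((α - β)/p - 1)) := by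
    rw [h3, div_rpow hy.le ht0.le, rpow_neg ht0.le, div_eq_mul_inv]
  have h5 : ((1+y) ^ (-(1/p)))⁻¹ = (1+y) ^ (1/p) := by
    rw [rpow_neg ht0.le, inv_inv]
  have h6 : u / ((1+y) ^ (-(1/p))) = u * (1+y) ^ (1/p) := by
    rw [div_eq_mul_inv, h5]
  have h7 : (u / ((1+y) ^ (-(1/p)))) ^ (-β - 1)
      = u ^ (-β - 1) * (1+y) ^ ((1/p) * (-β - 1)) := by
    rw [h6, mul_rpow hu.le (rpow_nonneg ht0.le _), ← rpow_mul ht0.le]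
  have h8 : Real.exp (-((u / ((1+y) ^ (-(1/p)))) ^ p))
      = Real.exp (-(u ^ p)) * Real.exp (-(u ^ p) * y) := by
    rw [h6, mul_rpow hu.le (rpow_nonneg ht0.le _), ← rpow_mul ht0.le,
      one_div_mul_cancel hp.ne', rpow_one, ← Real.exp_add]
    congr 1; ring
  rw [habs, h1, h4, h5, h7, h8]
  have hsum : (1+y) ^ (-(1/p) - 1) * ((1+y) ^ ((α + 1)/p) * ((1+y) ^ (-((α - β)/p - 1))
      * ((1+y) ^ (1/p) * (1+y) ^ ((1/p) * (-β - 1))))) = 1 := by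
    rw [← rpow_add ht0, ← rpow_add ht0, ← rpow_add ht0, ← rpow_add ht0,
      show -(1/p) - 1 + ((α + 1)/p + (-((α - β)/p - 1) + (1/p + (1/p) * (-β - 1)))) = 0 by
        field_simp; ring, rpow_zero]
  calc p⁻¹ * (1+y) ^ (-(1/p) - 1) *
        ((K⁻¹ * ((1+y) ^ ((α + 1)/p) * (y ^ ((α - β)/p - 1) * (1+y) ^ (-((α - β)/p - 1)))))
          * (1+y) ^ (1/p)
          * ((u ^ (-β - 1) * (1+y) ^ ((1/p) * (-β - 1)))
            * (Real.exp (-(u ^ p)) * Real.exp (-(u ^ p) * y))))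
      = ((1+y) ^ (-(1/p) - 1) * ((1+y) ^ ((α + 1)/p) * ((1+y) ^ (-((α - β)/p - 1))
          * ((1+y) ^ (1/p) * (1+y) ^ ((1/p) * (-β - 1))))))
        * (K⁻¹ * p⁻¹ * (u ^ (-β - 1) * Real.exp (-(u ^ p)))
          * (y ^ ((α - β)/p - 1) * Real.exp (-(u ^ p) * y))) := by ring
    _ = _ := by rw [hsum, one_mul]

lemma lintegral_image_Ioi {s : Set ℝ} (hs : MeasurableSet s) {f f' : ℝ → ℝ}
    (hff' : ∀ x ∈ s, HasDerivWithinAt f (f' x) s x) (hf : InjOn f s) (g : ℝ → ℝ≥0∞) :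
    ∫⁻ x in f '' s, g x = ∫⁻ x in s, ENNReal.ofReal |f' x| * g (f x) := by
  simpa only [ContinuousLinearMap.det_toSpanSingleton] using
    lintegral_image_eq_lintegral_abs_det_fderiv_mul volume hs
      (fun x hx => (hff' x hx).hasFDerivWithinAt) hf g


lemma Kconst_eq {α β p : ℝ} (hβα : β < α) (hp : 0 < p) :
    Kconst α β p = (1 / p) * Real.Gamma ((α - β) / p) := by
  rw [Kconst, integral_rpow_mul_exp_neg_rpow hp (by linarith)]
  norm_num

lemma Kconst_pos {α β p : ℝ} (hβα : β < α) (hp : 0 < p) : 0 < Kconst α β p := by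
  rw [Kconst_eq hβα hp]
  have := Real.Gamma_pos_of_pos (div_pos (by linarith : (0:ℝ) < α - β) hp)
  positivity

lemma conv_density (β α p : ℝ) (hβα : β < α) (hp : 0 < p) (u : ℝ) :
    (∫⁻ s in Ioi (0:ℝ),
        (if 0 < s ∧ s < 1 then
          ENNReal.ofReal ((Kconst α β p)⁻¹ * (s ^ (-α - 1) * (1 - s ^ p) ^ ((α - β) / p - 1)))
        else 0)
        * ENNReal.ofReal s⁻¹
        * (if 0 < u / s then
            ENNReal.ofReal ((u / s) ^ (-β - 1) * Real.exp (-((u / s) ^ p))) else 0))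
      = (if 0 < u then ENNReal.ofReal (u ^ (-α - 1) * Real.exp (-(u ^ p))) else 0) := by
  have hc0 : 0 < α - β := by linarith
  have hK : 0 < Kconst α β p := Kconst_pos hβα hp
  by_cases hu : 0 < u
  swap
  · rw [if_neg hu]
    rw [setLIntegral_congr_fun measurableSet_Ioi
      (fun s (hs : 0 < s) => ?_), lintegral_zero]
    have : ¬ (0 < u / s) := not_lt.mpr (div_nonpos_iff.mpr (Or.inr ⟨not_lt.mp hu, hs.le⟩))
    rw [if_neg this, mul_zero]
  rw [if_pos hu]
  -- the real density function on (0,1)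
  set G : ℝ → ℝ := fun s => ((Kconst α β p)⁻¹ * (s ^ (-α - 1) * (1 - s ^ p) ^ ((α - β) / p - 1)))
      * s⁻¹ * ((u / s) ^ (-β - 1) * Real.exp (-((u / s) ^ p))) with hG
  -- Step A+B : restrict to Ioo 0 1 and identify with ofReal ∘ G
  have stepAB : (∫⁻ s in Ioi (0:ℝ),
        (if 0 < s ∧ s < 1 then
          ENNReal.ofReal ((Kconst α β p)⁻¹ * (s ^ (-α - 1) * (1 - s ^ p) ^ ((α - β) / p - 1)))
        else 0)
        * ENNReal.ofReal s⁻¹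
        * (if 0 < u / s then
            ENNReal.ofReal ((u / s) ^ (-β - 1) * Real.exp (-((u / s) ^ p))) else 0))
      = ∫⁻ s in Ioo (0:ℝ) 1, ENNReal.ofReal (G s) := by
    rw [← lintegral_indicator measurableSet_Ioi, ← lintegral_indicator measurableSet_Ioo]
    congr 1; ext s
    rcases le_or_gt s 0 with hs | hs0
    · rw [indicator_of_notMem (by simpa using hs : s ∉ Ioi (0:ℝ)),
        indicator_of_notMem (by intro h; exact absurd h.1 (not_lt.mpr hs))]
    rcases lt_or_ge s 1 with hs1 | hs1
    · have hsp : (0:ℝ) ≤ 1 - s ^ p := by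
        have := Real.rpow_lt_one hs0.le hs1 hp; linarith
      have hA : 0 ≤ (Kconst α β p)⁻¹ * (s ^ (-α - 1) * (1 - s ^ p) ^ ((α - β) / p - 1)) :=
        mul_nonneg (inv_nonneg.mpr hK.le)
          (mul_nonneg (rpow_nonneg hs0.le _) (rpow_nonneg hsp _))
      rw [indicator_of_mem (mem_Ioi.mpr hs0), indicator_of_mem (mem_Ioo.mpr ⟨hs0, hs1⟩)]
      rw [if_pos ⟨hs0, hs1⟩, if_pos (div_pos hu hs0)]
      rw [hG, ← ENNReal.ofReal_mul hA,
        ← ENNReal.ofReal_mul (mul_nonneg hA (inv_nonneg.mpr hs0.le))]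
    · rw [indicator_of_mem (mem_Ioi.mpr hs0),
        indicator_of_notMem (by intro h; exact absurd h.2 hs1.not_gt)]
      rw [if_neg (by intro h; exact absurd h.2 hs1.not_gt), zero_mul, zero_mul]
  rw [stepAB]
  -- change of variables s = (1+y)^(-1/p), y ∈ (0,∞)
  have himg : (fun y : ℝ => (1+y) ^ (-(1/p))) '' Ioi 0 = Ioo (0:ℝ) 1 := by
    ext x
    constructor
    · rintro ⟨y, hy, rfl⟩
      have hy0 : (0:ℝ) < y := hy
      exact ⟨rpow_pos_of_pos (by linarith) _,
        rpow_lt_one_of_one_lt_of_neg (by linarith) (neg_lt_zero.mpr (by positivity))⟩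
    · rintro ⟨hx0, hx1⟩
      refine ⟨x ^ (-p) - 1, ?_, ?_⟩
      · have : 1 < x ^ (-p) :=
          (Real.one_lt_rpow_iff_of_pos hx0).mpr (Or.inr ⟨hx1, by linarith⟩)
        simpa using this
      · simp only [add_sub_cancel]
        rw [← rpow_mul hx0.le, show -p * -(1/p) = 1 by field_simp, rpow_one]
  have hderiv : ∀ y ∈ Ioi (0:ℝ), HasDerivWithinAt (fun y : ℝ => (1+y) ^ (-(1/p)))
      ((-(1/p)) * (1+y) ^ (-(1/p) - 1)) (Ioi 0) y := by
    intro y hy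
    have hy0 : (0:ℝ) < y := hy
    have hne : (1:ℝ) + id y ≠ 0 := by simp only [id_eq]; positivity
    have hd := HasDerivAt.rpow_const (f := fun y : ℝ => 1 + y) (p := -(1/p))
      ((hasDerivAt_id y).const_add 1) (Or.inl hne)
    simpa using hd.hasDerivWithinAt
  have hinj : InjOn (fun y : ℝ => (1+y) ^ (-(1/p))) (Ioi 0) := by
    intro a ha b hb hab
    have ha0 : (0:ℝ) < a := ha
    have hb0 : (0:ℝ) < b := hb
    have h1 : ((1+a) ^ (-(1/p))) ^ (-p) = 1 + a := by
      rw [← rpow_mul (by linarith), show -(1/p) * -p = 1 by field_simp, rpow_one]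
    have h2 : ((1+b) ^ (-(1/p))) ^ (-p) = 1 + b := by
      rw [← rpow_mul (by linarith), show -(1/p) * -p = 1 by field_simp, rpow_one]
    have : (1:ℝ) + a = 1 + b := by
      rw [← h1, ← h2]
      exact congrArg (· ^ (-p)) hab
    linarith
  rw [← himg, lintegral_image_Ioi measurableSet_Ioi hderiv hinj]
  have hΓ : 0 < Real.Gamma ((α - β)/p) :=
    Real.Gamma_pos_of_pos (div_pos hc0 hp)
  have hC1 : (0:ℝ) ≤ (Kconst α β p)⁻¹ * p⁻¹ * (u ^ (-β - 1) * Real.exp (-(u ^ p))) := by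
    positivity
  rw [setLIntegral_congr_fun measurableSet_Ioi (fun y (hy : 0 < y) => ?_)
    (g := fun y => ENNReal.ofReal ((Kconst α β p)⁻¹ * p⁻¹ * (u ^ (-β - 1)
      * Real.exp (-(u ^ p))) * (y ^ ((α - β)/p - 1) * Real.exp (-(u ^ p) * y))))]
  swap
  · rw [hG, ← ENNReal.ofReal_mul (abs_nonneg _), pointwise_id hp hu hy]
  simp_rw [ENNReal.ofReal_mul hC1]
  rw [lintegral_const_mul' _ _ ENNReal.ofReal_ne_top]
  -- evaluate the Gamma integral
  have hup : (0:ℝ) < u ^ p := rpow_pos_of_pos hu p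
  have hIoR : (∫⁻ y in Ioi (0:ℝ), ENNReal.ofReal (y ^ ((α - β)/p - 1)
      * Real.exp (-(u ^ p) * y)))
      = ENNReal.ofReal ((u ^ p) ^ (-((α - β)/p)) * Real.Gamma ((α - β)/p)) := by
    have hint : IntegrableOn (fun y : ℝ => y ^ ((α - β)/p - 1) * Real.exp (-(u ^ p) * y))
        (Ioi 0) := by
      have := integrableOn_rpow_mul_exp_neg_mul_rpow
        (by linarith [div_pos hc0 hp] : (-1:ℝ) < (α - β)/p - 1) one_pos hup
      exact this.congr_fun (fun y hy => by beta_reduce; rw [rpow_one]) measurableSet_Ioi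
    rw [← ofReal_integral_eq_lintegral_ofReal hint ((ae_restrict_iff' measurableSet_Ioi).mpr
      (ae_of_all _ (fun y (hy : 0 < y) => by positivity)))]
    congr 1
    have heval := integral_rpow_mul_exp_neg_mul_rpow
      (by norm_num : (0:ℝ) < 1) (by linarith [div_pos hc0 hp] : (-1:ℝ) < (α - β)/p - 1) hup
    have hcongr : (∫ y in Ioi (0:ℝ), y ^ ((α - β)/p - 1) * Real.exp (-(u ^ p) * y))
        = ∫ y in Ioi (0:ℝ), y ^ ((α - β)/p - 1) * Real.exp (-(u ^ p) * y ^ (1:ℝ)) :=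
      setIntegral_congr_fun measurableSet_Ioi (fun y hy => by rw [rpow_one])
    rw [hcongr, heval, sub_add_cancel]
    norm_num
  rw [hIoR, ← ENNReal.ofReal_mul hC1]
  congr 1
  rw [Kconst_eq hβα hp]
  have e1 : (u ^ p) ^ (-((α - β)/p)) = u ^ (β - α) := by
    rw [← rpow_mul hu.le]
    congr 1
    field_simp
    ring
  rw [e1]
  have e2 : u ^ (-β - 1) * u ^ (β - α) = u ^ (-α - 1) := by
    rw [← rpow_add hu]; congr 1; ring
  rw [mul_inv, one_div, inv_inv]
  calc p * (Real.Gamma ((α-β)/p))⁻¹ * p⁻¹ * (u ^ (-β-1) * Real.exp (-(u^p)))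
        * (u ^ (β-α) * Real.Gamma ((α-β)/p))
      = (p * p⁻¹) * ((Real.Gamma ((α-β)/p))⁻¹ * Real.Gamma ((α-β)/p))
          * ((u ^ (-β-1) * u ^ (β-α)) * Real.exp (-(u^p))) := by ring
    _ = _ := by
        rw [mul_inv_cancel₀ hp.ne', inv_mul_cancel₀ hΓ.ne', e2, one_mul, one_mul]





lemma measurable_phi : Measurable (fun x : E => ENNReal.ofReal (min (‖x‖ ^ 2) 1)) :=
  ENNReal.measurable_ofReal.comp ((measurable_norm.pow_const 2).min measurable_const)

lemma setLIntegral_mono_on {μ : Measure ℝ} {s : Set ℝ} (hs : MeasurableSet s)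
    {f g : ℝ → ℝ≥0∞} (h : ∀ x ∈ s, f x ≤ g x) :
    ∫⁻ x in s, f x ∂μ ≤ ∫⁻ x in s, g x ∂μ := by
  rw [← lintegral_indicator hs, ← lintegral_indicator hs]
  refine lintegral_mono fun x => ?_
  by_cases hx : x ∈ s
  · simpa [indicator_of_mem hx] using h x hx
  · simp [indicator_of_notMem hx]

lemma isLevy_of (μ : Measure E) (h0 : μ {0} = 0)
    (hi : ∫⁻ x, ENNReal.ofReal (min (‖x‖ ^ 2) 1) ∂μ < ⊤) : IsLevyMeasure μ := by
  refine ⟨?_, h0, hi⟩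
  refine Measure.sigmaFinite_of_countable
    (S := insert ({0} : Set E) (range (fun n : ℕ => {x : E | (1/(n+1) : ℝ) < ‖x‖})))
    ((countable_range _).insert _) ?_ ?_
  · rintro s (rfl | ⟨n, rfl⟩)
    · simpa [h0] using (zero_lt_top : (0:ℝ≥0∞) < ⊤)
    · set A : Set E := {x : E | (1/(n+1) : ℝ) < ‖x‖} with hA
      have hAm : MeasurableSet A := measurableSet_lt measurable_const measurable_norm
      have hcn : (0:ℝ) < min ((1/(n+1):ℝ)^2) 1 := by positivity
      have key : ENNReal.ofReal (min ((1/(n+1):ℝ)^2) 1) * μ A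
          ≤ ∫⁻ x, ENNReal.ofReal (min (‖x‖ ^ 2) 1) ∂μ := by
        rw [← setLIntegral_const A _]
        refine le_trans (setLIntegral_mono' hAm (fun x hx => ?_)) (setLIntegral_le_lintegral _ _)
        refine ENNReal.ofReal_le_ofReal (min_le_min ?_ le_rfl)
        have hx' : (1/(n+1) : ℝ) < ‖x‖ := hx
        have h1 : (0:ℝ) ≤ 1/(n+1) := by positivity
        nlinarith [norm_nonneg x]
      have hnn : (0:ℝ) < ((n:ℝ)+1)^2 := by positivity
      have hne : ENNReal.ofReal (min ((1/(n+1):ℝ)^2) 1) ≠ 0 := by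
        simp only [ne_eq, ENNReal.ofReal_eq_zero, not_le]
        exact hcn
      calc μ A = (ENNReal.ofReal (min ((1/(n+1):ℝ)^2) 1))⁻¹
            * (ENNReal.ofReal (min ((1/(n+1):ℝ)^2) 1) * μ A) := by
            rw [← mul_assoc, ENNReal.inv_mul_cancel hne ENNReal.ofReal_ne_top, one_mul]
        _ ≤ (ENNReal.ofReal (min ((1/(n+1):ℝ)^2) 1))⁻¹
            * ∫⁻ x, ENNReal.ofReal (min (‖x‖ ^ 2) 1) ∂μ := by
            exact mul_le_mul_right key _
        _ < ⊤ := ENNReal.mul_lt_top (ENNReal.inv_lt_top.mpr (by simpa using hcn)) hi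
  · rw [sUnion_insert]
    refine eq_univ_of_forall fun x => ?_
    by_cases hx : x = 0
    · exact Or.inl (by simp [hx])
    · right
      have hx0 : 0 < ‖x‖ := norm_pos_iff.mpr hx
      obtain ⟨n, hn⟩ := exists_nat_one_div_lt hx0
      exact mem_sUnion.mpr ⟨_, ⟨n, rfl⟩, hn⟩

lemma upsilon_zero (ρ : Measure ℝ) [SFinite ρ] (hρ0 : ρ {0} = 0)
    (M : Measure E) [SFinite M] (hM0 : M {0} = 0) : (Upsilon ρ M) {0} = 0 := by
  rw [Upsilon, Measure.map_apply measurable_smul2 (measurableSet_singleton 0)]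
  have hsub : (fun sx : ℝ × E => sx.1 • sx.2) ⁻¹' {0}
      ⊆ (({0} : Set ℝ) ×ˢ (univ : Set E)) ∪ ((univ : Set ℝ) ×ˢ ({0} : Set E)) := by
    rintro ⟨s, x⟩ h
    have : s • x = 0 := h
    rcases smul_eq_zero.mp this with h | h
    · exact Or.inl ⟨h, trivial⟩
    · exact Or.inr ⟨trivial, h⟩
  refine le_antisymm (le_trans (measure_mono hsub) ?_) zero_le
  refine le_trans (measure_union_le _ _) ?_
  rw [Measure.prod_prod, Measure.prod_prod, hρ0, hM0, zero_mul, mul_zero, add_zero]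

lemma upsilon_lintegral (ρ : Measure ℝ) [SFinite ρ] (M : Measure E) [SFinite M]
    (φ : E → ℝ≥0∞) (hφ : Measurable φ) :
    ∫⁻ x, φ x ∂(Upsilon ρ M) = ∫⁻ x, (∫⁻ s, φ (s • x) ∂ρ) ∂M := by
  rw [Upsilon, lintegral_map hφ measurable_smul2]
  exact lintegral_prod_symm _ (hφ.comp measurable_smul2).aemeasurable


lemma measurable_psiDens (α p : ℝ) :
    Measurable (fun s : ℝ =>
      if 0 < s then ENNReal.ofReal (s ^ (-α - 1) * Real.exp (-(s ^ p))) else 0) := by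
  refine Measurable.ite measurableSet_Ioi ?_ measurable_const
  refine ENNReal.measurable_ofReal.comp (Measurable.mul ?_ ?_)
  · exact measurable_id.pow_const _
  · exact ((measurable_id.pow_const _).neg).exp



-- min inequality helpers
lemma min_sq_le {a b : ℝ} (ha : 1 ≤ a) (hb : 0 ≤ b) :
    min ((a * b) ^ 2) 1 ≤ a ^ 2 * min (b ^ 2) 1 := by
  rcases le_total b 1 with h | h
  · rw [min_eq_left (by nlinarith : b ^ 2 ≤ 1)]
    calc min ((a*b)^2) 1 ≤ (a*b)^2 := min_le_left _ _
      _ = a^2 * b^2 := by ring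
  · rw [min_eq_right (by nlinarith : (1:ℝ) ≤ b ^ 2), mul_one]
    calc min ((a*b)^2) 1 ≤ 1 := min_le_right _ _
      _ ≤ a^2 := by nlinarith

lemma min_sq_ge {a b : ℝ} (ha : 1 ≤ a) (hb : 0 ≤ b) :
    min (b ^ 2) 1 ≤ min ((a * b) ^ 2) 1 := by
  have h1 : (1:ℝ) ≤ a ^ 2 := by nlinarith
  refine le_min (le_trans (min_le_left _ _) ?_) (min_le_right _ _)
  calc b ^ 2 = 1 * b ^ 2 := by ring
    _ ≤ a ^ 2 * b ^ 2 := mul_le_mul_of_nonneg_right h1 (sq_nonneg b)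
    _ = (a * b) ^ 2 := by ring

theorem psi_compare {β α p : ℝ} {E : Type*} [NormedAddCommGroup E] [NormedSpace ℝ E]
    [MeasurableSpace E] [BorelSpace E]
    (hβα : β < α) (hα : α < 2) (hp : 0 < p) :
    ∃ C : ℝ≥0∞, C ≠ ⊤ ∧ ∀ x : E,
      (∫⁻ s, ENNReal.ofReal (min (‖s • x‖ ^ 2) 1) ∂(psiMeasure β p))
        ≤ C * ∫⁻ s, ENNReal.ofReal (min (‖s • x‖ ^ 2) 1) ∂(psiMeasure α p) := by
  set Cb : ℝ≥0∞ := ∫⁻ s in Ioi (1:ℝ), ENNReal.ofReal (s ^ (1 - β) * Real.exp (-(s ^ p)))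
    with hCb
  set c0 : ℝ≥0∞ := ∫⁻ s in Ioc (1:ℝ) 2, ENNReal.ofReal (s ^ (-α - 1) * Real.exp (-(s ^ p)))
    with hc0
  have hCbt : Cb ≠ ⊤ := by
    have hle : Cb ≤ ∫⁻ s in Ioi (0:ℝ), ENNReal.ofReal (s ^ (1 - β) * Real.exp (-(s ^ p))) :=
      lintegral_mono' (Measure.restrict_mono (Ioi_subset_Ioi zero_le_one) le_rfl) le_rfl
    have : (∫⁻ s in Ioi (0:ℝ), ENNReal.ofReal (s ^ (1 - β) * Real.exp (-(s ^ p))))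
        = ENNReal.ofReal (∫ s in Ioi (0:ℝ), s ^ (1 - β) * Real.exp (-(s ^ p))) := by
      rw [← ofReal_integral_eq_lintegral_ofReal (aux_intOn (by linarith) hp)
        ((ae_restrict_iff' measurableSet_Ioi).mpr
          (ae_of_all _ (fun s (hs : 0 < s) => by positivity)))]
    exact (lt_of_le_of_lt hle (this ▸ ENNReal.ofReal_lt_top)).ne
  have hc0top : c0 ≠ ⊤ := by
    have hle : c0 ≤ ∫⁻ _ in Ioc (1:ℝ) 2, ENNReal.ofReal (max 1 (2 ^ (-α - 1))) := by
      refine setLIntegral_mono_on measurableSet_Ioc (fun s hs => ?_)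
      refine ENNReal.ofReal_le_ofReal ?_
      have h1s : 1 ≤ s := hs.1.le
      have hs2 : s ≤ 2 := hs.2
      have hexp : Real.exp (-(s ^ p)) ≤ 1 := by
        rw [Real.exp_le_one_iff]
        have : (0:ℝ) ≤ s ^ p := rpow_nonneg (by linarith) p
        linarith
      have hpow : s ^ (-α - 1) ≤ max 1 (2 ^ (-α - 1)) := by
        rcases le_total 0 (-α - 1) with he | he
        · exact le_max_of_le_right (rpow_le_rpow (by linarith) hs2 he)
        · exact le_max_of_le_left (Real.rpow_le_one_of_one_le_of_nonpos h1s he)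
      calc s ^ (-α - 1) * Real.exp (-(s ^ p)) ≤ s ^ (-α - 1) * 1 := by
            exact mul_le_mul_of_nonneg_left hexp (rpow_nonneg (by linarith) _)
        _ ≤ max 1 (2 ^ (-α - 1)) := by rw [mul_one]; exact hpow
    rw [setLIntegral_const] at hle
    exact (lt_of_le_of_lt hle (ENNReal.mul_lt_top ENNReal.ofReal_lt_top
      (by simp [Real.volume_Ioc]))).ne
  have hc0pos : 0 < c0 := by
    have hge : ∫⁻ _ in Ioc (1:ℝ) 2,
        ENNReal.ofReal (min 1 (2 ^ (-α - 1)) * Real.exp (-(2 ^ p))) ≤ c0 := by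
      refine setLIntegral_mono_on measurableSet_Ioc (fun s hs => ?_)
      refine ENNReal.ofReal_le_ofReal ?_
      have h1s : 1 ≤ s := hs.1.le
      have hs0 : (0:ℝ) < s := by linarith
      have hs2 : s ≤ 2 := hs.2
      have hexp : Real.exp (-(2 ^ p)) ≤ Real.exp (-(s ^ p)) := by
        apply Real.exp_le_exp.mpr
        have : s ^ p ≤ 2 ^ p := rpow_le_rpow hs0.le hs2 hp.le
        linarith
      have hpow : min 1 (2 ^ (-α - 1)) ≤ s ^ (-α - 1) := by
        rcases le_total 0 (-α - 1) with he | he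
        · exact le_trans (min_le_left _ _) (Real.one_le_rpow h1s he)
        · refine le_trans (min_le_right _ _) ?_
          rw [← neg_neg (-α - 1), rpow_neg (by norm_num : (0:ℝ) ≤ 2), rpow_neg hs0.le]
          exact inv_anti₀ (rpow_pos_of_pos hs0 _)
            (rpow_le_rpow hs0.le hs2 (by linarith))
      exact mul_le_mul hpow hexp (Real.exp_pos _).le (rpow_nonneg hs0.le _)
    rw [setLIntegral_const] at hge
    refine lt_of_lt_of_le ?_ hge
    have h1 : (0:ℝ) < min 1 (2 ^ (-α - 1)) * Real.exp (-(2 ^ p)) := by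
      have : (0:ℝ) < 2 ^ (-α-1) := rpow_pos_of_pos (by norm_num) _
      have := Real.exp_pos (-(2 ^ p))
      have hmin : (0:ℝ) < min 1 (2 ^ (-α-1)) := lt_min one_pos ‹(0:ℝ) < 2 ^ (-α-1)›
      positivity
    simp [Real.volume_Ioc, ENNReal.ofReal_pos, h1]
  refine ⟨1 + Cb * c0⁻¹, ENNReal.add_ne_top.mpr ⟨ENNReal.one_ne_top,
    ENNReal.mul_ne_top hCbt (ENNReal.inv_ne_top.mpr hc0pos.ne')⟩, fun x => ?_⟩
  set m : ℝ≥0∞ := ENNReal.ofReal (min (‖x‖ ^ 2) 1) with hm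
  have hφx : Measurable (fun s : ℝ => ENNReal.ofReal (min (‖s • x‖ ^ 2) 1)) :=
    ENNReal.measurable_ofReal.comp
      ((((measurable_id.smul_const x).norm).pow_const 2).min measurable_const)
  have hexpand : ∀ γ : ℝ,
      (∫⁻ s, ENNReal.ofReal (min (‖s • x‖ ^ 2) 1) ∂(psiMeasure γ p))
        = ∫⁻ s in Ioi (0:ℝ),
            (if 0 < s then ENNReal.ofReal (s ^ (-γ - 1) * Real.exp (-(s ^ p))) else 0)
              * ENNReal.ofReal (min (‖s • x‖ ^ 2) 1) ∂volume := by
    intro γ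
    rw [psiMeasure, lintegral_withDensity_eq_lintegral_mul _ (measurable_psiDens γ p) hφx,
      ← lintegral_indicator measurableSet_Ioi]
    congr 1; ext s
    simp only [Pi.mul_apply]
    by_cases hs : 0 < s
    · rw [indicator_of_mem (mem_Ioi.mpr hs)]
    · rw [indicator_of_notMem (fun hc => hs (mem_Ioi.mp hc))]
      simp [if_neg hs]
  have hsplit : ∀ γ : ℝ, (∫⁻ s in Ioi (0:ℝ),
        (if 0 < s then ENNReal.ofReal (s ^ (-γ - 1) * Real.exp (-(s ^ p))) else 0)
          * ENNReal.ofReal (min (‖s • x‖ ^ 2) 1) ∂volume)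
      = (∫⁻ s in Ioc (0:ℝ) 1,
          (if 0 < s then ENNReal.ofReal (s ^ (-γ - 1) * Real.exp (-(s ^ p))) else 0)
            * ENNReal.ofReal (min (‖s • x‖ ^ 2) 1) ∂volume)
        + ∫⁻ s in Ioi (1:ℝ),
            (if 0 < s then ENNReal.ofReal (s ^ (-γ - 1) * Real.exp (-(s ^ p))) else 0)
              * ENNReal.ofReal (min (‖s • x‖ ^ 2) 1) ∂volume := by
    intro γ
    rw [← Ioc_union_Ioi_eq_Ioi (zero_le_one : (0:ℝ) ≤ 1),
      lintegral_union measurableSet_Ioi (Ioc_disjoint_Ioi le_rfl)]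
  rw [hexpand β, hexpand α, hsplit β]
  have hnorm : ∀ s : ℝ, 0 < s → ‖s • x‖ = s * ‖x‖ := fun s hs => by
    rw [norm_smul, Real.norm_eq_abs, abs_of_pos hs]
  -- part 1 bound
  have b1 : (∫⁻ s in Ioc (0:ℝ) 1,
        (if 0 < s then ENNReal.ofReal (s ^ (-β - 1) * Real.exp (-(s ^ p))) else 0)
          * ENNReal.ofReal (min (‖s • x‖ ^ 2) 1) ∂volume)
      ≤ ∫⁻ s in Ioi (0:ℝ),
          (if 0 < s then ENNReal.ofReal (s ^ (-α - 1) * Real.exp (-(s ^ p))) else 0)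
            * ENNReal.ofReal (min (‖s • x‖ ^ 2) 1) ∂volume := by
    refine le_trans (setLIntegral_mono_on measurableSet_Ioc (fun s hs => ?_))
      (lintegral_mono' (Measure.restrict_mono Ioc_subset_Ioi_self le_rfl) le_rfl)
    have hs0 : 0 < s := hs.1
    rw [if_pos hs0, if_pos hs0]
    refine mul_le_mul_left (ENNReal.ofReal_le_ofReal ?_) _
    refine mul_le_mul_of_nonneg_right ?_ (Real.exp_pos _).le
    exact rpow_le_rpow_of_exponent_ge hs0 hs.2 (by linarith)
  -- part 2 bound
  have b2 : (∫⁻ s in Ioi (1:ℝ),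
        (if 0 < s then ENNReal.ofReal (s ^ (-β - 1) * Real.exp (-(s ^ p))) else 0)
          * ENNReal.ofReal (min (‖s • x‖ ^ 2) 1) ∂volume)
      ≤ Cb * m := by
    have step : ∀ s : ℝ, s ∈ Ioi (1:ℝ) →
        (if 0 < s then ENNReal.ofReal (s ^ (-β - 1) * Real.exp (-(s ^ p))) else 0)
          * ENNReal.ofReal (min (‖s • x‖ ^ 2) 1)
        ≤ ENNReal.ofReal (s ^ (1 - β) * Real.exp (-(s ^ p))) * m := by
      intro s hs
      have hs1 : 1 < s := hs
      have hs0 : 0 < s := lt_trans zero_lt_one hs1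
      rw [if_pos hs0, hnorm s hs0]
      calc ENNReal.ofReal (s ^ (-β - 1) * Real.exp (-(s ^ p)))
            * ENNReal.ofReal (min ((s * ‖x‖) ^ 2) 1)
          ≤ ENNReal.ofReal (s ^ (-β - 1) * Real.exp (-(s ^ p)))
            * ENNReal.ofReal (s ^ (2:ℕ) * min (‖x‖ ^ 2) 1) := by
            refine mul_le_mul_right (ENNReal.ofReal_le_ofReal ?_) _
            exact min_sq_le hs1.le (norm_nonneg x)
        _ = ENNReal.ofReal (s ^ (-β - 1) * Real.exp (-(s ^ p)) * s ^ (2:ℕ)) * m := by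
            rw [hm,
              ← ENNReal.ofReal_mul (by positivity : (0:ℝ) ≤ s ^ (-β - 1) * Real.exp (-(s ^ p))),
              ← ENNReal.ofReal_mul
                (by positivity : (0:ℝ) ≤ s ^ (-β - 1) * Real.exp (-(s ^ p)) * s ^ (2:ℕ))]
            congr 1; ring
        _ = ENNReal.ofReal (s ^ (1 - β) * Real.exp (-(s ^ p))) * m := by
            congr 2
            rw [← Real.rpow_natCast s 2]
            have h2 : s ^ (-β - 1) * s ^ ((2:ℕ):ℝ) = s ^ (1 - β) := by
              rw [← Real.rpow_add hs0]; congr 1; push_cast; ring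
            calc s ^ (-β - 1) * Real.exp (-(s ^ p)) * s ^ ((2:ℕ):ℝ)
                = (s ^ (-β - 1) * s ^ ((2:ℕ):ℝ)) * Real.exp (-(s ^ p)) := by ring
              _ = s ^ (1 - β) * Real.exp (-(s ^ p)) := by rw [h2]
    calc (∫⁻ s in Ioi (1:ℝ), _ ∂volume)
        ≤ ∫⁻ s in Ioi (1:ℝ),
            ENNReal.ofReal (s ^ (1 - β) * Real.exp (-(s ^ p))) * m ∂volume :=
          setLIntegral_mono_on measurableSet_Ioi step
      _ = Cb * m := by
          rw [lintegral_mul_const' m _ (by rw [hm]; exact ENNReal.ofReal_ne_top), hCb]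
  -- lower bound for Φα
  have b3 : c0 * m ≤ ∫⁻ s in Ioi (0:ℝ),
      (if 0 < s then ENNReal.ofReal (s ^ (-α - 1) * Real.exp (-(s ^ p))) else 0)
        * ENNReal.ofReal (min (‖s • x‖ ^ 2) 1) ∂volume := by
    have step : ∀ s : ℝ, s ∈ Ioc (1:ℝ) 2 →
        ENNReal.ofReal (s ^ (-α - 1) * Real.exp (-(s ^ p))) * m
          ≤ (if 0 < s then ENNReal.ofReal (s ^ (-α - 1) * Real.exp (-(s ^ p))) else 0)
            * ENNReal.ofReal (min (‖s • x‖ ^ 2) 1) := by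
      intro s hs
      have hs1 : 1 < s := hs.1
      have hs0 : 0 < s := lt_trans zero_lt_one hs1
      rw [if_pos hs0, hnorm s hs0, hm]
      exact mul_le_mul_right (ENNReal.ofReal_le_ofReal
        (min_sq_ge hs1.le (norm_nonneg x))) _
    calc c0 * m = ∫⁻ s in Ioc (1:ℝ) 2,
          ENNReal.ofReal (s ^ (-α - 1) * Real.exp (-(s ^ p))) * m ∂volume := by
          rw [lintegral_mul_const' m _ (by rw [hm]; exact ENNReal.ofReal_ne_top), hc0]
      _ ≤ ∫⁻ s in Ioc (1:ℝ) 2,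
          (if 0 < s then ENNReal.ofReal (s ^ (-α - 1) * Real.exp (-(s ^ p))) else 0)
            * ENNReal.ofReal (min (‖s • x‖ ^ 2) 1) ∂volume :=
          setLIntegral_mono_on measurableSet_Ioc step
      _ ≤ _ := lintegral_mono' (Measure.restrict_mono
          (fun s hs => lt_trans zero_lt_one hs.1) le_rfl) le_rfl
  have hmle : m ≤ c0⁻¹ * ∫⁻ s in Ioi (0:ℝ),
      (if 0 < s then ENNReal.ofReal (s ^ (-α - 1) * Real.exp (-(s ^ p))) else 0)
        * ENNReal.ofReal (min (‖s • x‖ ^ 2) 1) ∂volume := by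
    calc m = c0⁻¹ * (c0 * m) := by
          rw [← mul_assoc, ENNReal.inv_mul_cancel hc0pos.ne' hc0top, one_mul]
      _ ≤ _ := mul_le_mul_right b3 _
  calc _ ≤ (∫⁻ s in Ioi (0:ℝ),
        (if 0 < s then ENNReal.ofReal (s ^ (-α - 1) * Real.exp (-(s ^ p))) else 0)
          * ENNReal.ofReal (min (‖s • x‖ ^ 2) 1) ∂volume) + Cb * m :=
        add_le_add b1 b2
    _ ≤ (∫⁻ s in Ioi (0:ℝ),
        (if 0 < s then ENNReal.ofReal (s ^ (-α - 1) * Real.exp (-(s ^ p))) else 0)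
          * ENNReal.ofReal (min (‖s • x‖ ^ 2) 1) ∂volume)
        + Cb * (c0⁻¹ * ∫⁻ s in Ioi (0:ℝ),
          (if 0 < s then ENNReal.ofReal (s ^ (-α - 1) * Real.exp (-(s ^ p))) else 0)
            * ENNReal.ofReal (min (‖s • x‖ ^ 2) 1) ∂volume) :=
        add_le_add le_rfl (mul_le_mul_right hmle _)
    _ = (1 + Cb * c0⁻¹) * ∫⁻ s in Ioi (0:ℝ),
        (if 0 < s then ENNReal.ofReal (s ^ (-α - 1) * Real.exp (-(s ^ p))) else 0)
          * ENNReal.ofReal (min (‖s • x‖ ^ 2) 1) ∂volume := by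
        rw [add_mul, one_mul, mul_assoc]

instance psiMeasure_sfinite (α p : ℝ) : SFinite (psiMeasure α p) := by
  unfold psiMeasure; infer_instance

instance tauMeasure_sfinite (β α p : ℝ) : SFinite (tauMeasure β α p) := by
  unfold tauMeasure; infer_instance

lemma psiMeasure_zero (γ p : ℝ) : psiMeasure γ p {0} = 0 := by
  rw [psiMeasure, withDensity_apply _ (measurableSet_singleton 0),
    setLIntegral_measure_zero _ _ (by simp)]

lemma tau_psi_comp {β α p : ℝ} (hβα : β < α) (hp : 0 < p)
    (M : Measure E) [SFinite M] :
    Upsilon (tauMeasure β α p) (Upsilon (psiMeasure β p) M) = Upsilon (psiMeasure α p) M := by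
  have hg : Measurable (fun s : ℝ => if 0 < s ∧ s < 1 then
      ENNReal.ofReal ((Kconst α β p)⁻¹ * (s ^ (-α - 1) * (1 - s ^ p) ^ ((α - β) / p - 1)))
      else 0) := by
    refine Measurable.ite measurableSet_Ioo ?_ measurable_const
    exact ENNReal.measurable_ofReal.comp (measurable_const.mul
      ((measurable_id.pow_const _).mul
        ((measurable_const.sub (measurable_id.pow_const p)).pow_const _)))
  have hmm := map_mul_prod _ _ hg (measurable_psiDens β p)
    (fun s hs => by rw [if_neg (fun hc => absurd hc.1 (not_lt.mpr hs))])
    (fun s => by split <;> simp)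
  rw [upsilon_comp]
  unfold tauMeasure psiMeasure
  rw [hmm, show (fun u : ℝ => ∫⁻ s in Ioi (0:ℝ),
        (if 0 < s ∧ s < 1 then
          ENNReal.ofReal ((Kconst α β p)⁻¹ * (s ^ (-α - 1) * (1 - s ^ p) ^ ((α - β) / p - 1)))
        else 0)
        * ENNReal.ofReal s⁻¹
        * (if 0 < u / s then
            ENNReal.ofReal ((u / s) ^ (-β - 1) * Real.exp (-((u / s) ^ p))) else 0))
      = (fun u : ℝ => if 0 < u then ENNReal.ofReal (u ^ (-α - 1) * Real.exp (-(u ^ p))) else 0)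
      from funext (conv_density β α p hβα hp)]

lemma levy_transfer {β α p : ℝ} (hβα : β < α) (hα : α < 2) (hp : 0 < p)
    (M : Measure E) (hM : IsLevyMeasure M)
    (hA : IsLevyMeasure (Upsilon (psiMeasure α p) M)) :
    IsLevyMeasure (Upsilon (psiMeasure β p) M) := by
  haveI : SigmaFinite M := hM.1
  have h0 : (Upsilon (psiMeasure β p) M) {0} = 0 :=
    upsilon_zero _ (psiMeasure_zero β p) _ hM.2.1
  refine isLevy_of _ h0 ?_
  rw [upsilon_lintegral _ _ _ measurable_phi]
  obtain ⟨C, hC, hCle⟩ := psi_compare (E := E) hβα hα hp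
  calc ∫⁻ x, (∫⁻ s, ENNReal.ofReal (min (‖s • x‖ ^ 2) 1) ∂(psiMeasure β p)) ∂M
      ≤ ∫⁻ x, C * ∫⁻ s, ENNReal.ofReal (min (‖s • x‖ ^ 2) 1) ∂(psiMeasure α p) ∂M :=
        lintegral_mono (fun x => hCle x)
    _ = C * ∫⁻ x, (∫⁻ s, ENNReal.ofReal (min (‖s • x‖ ^ 2) 1) ∂(psiMeasure α p)) ∂M :=
        lintegral_const_mul' _ _ hC
    _ = C * ∫⁻ x, ENNReal.ofReal (min (‖x‖ ^ 2) 1) ∂(Upsilon (psiMeasure α p) M) := by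
        rw [← upsilon_lintegral _ _ _ measurable_phi]
    _ < ⊤ := ENNReal.mul_lt_top (lt_top_iff_ne_top.mpr hC) hA.2.2

end AuxLemmas

theorem stmt8 (d : ℕ) (hd : 1 ≤ d) (β α p : ℝ) (hβα : β < α) (hα : α < 2) (hp : 0 < p) :
    UpsilonDomain (E := EuclideanSpace ℝ (Fin d)) (psiMeasure α p) =
      {M ∈ UpsilonDomain (psiMeasure β p) |
        Upsilon (psiMeasure β p) M ∈ UpsilonDomain (tauMeasure β α p)} ∧
    ∀ M ∈ UpsilonDomain (E := EuclideanSpace ℝ (Fin d)) (psiMeasure α p),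
      Upsilon (tauMeasure β α p) (Upsilon (psiMeasure β p) M) =
        Upsilon (psiMeasure α p) M := by
  constructor
  · ext M
    simp only [UpsilonDomain, mem_setOf_eq, mem_sep_iff]
    constructor
    · rintro ⟨hM, hA⟩
      haveI : SigmaFinite M := hM.1
      have hB : IsLevyMeasure (Upsilon (psiMeasure β p) M) := levy_transfer hβα hα hp M hM hA
      refine ⟨⟨hM, hB⟩, hB, ?_⟩
      rw [tau_psi_comp hβα hp M]
      exact hA
    · rintro ⟨⟨hM, hB⟩, _, hT⟩
      haveI : SigmaFinite M := hM.1
      rw [tau_psi_comp hβα hp M] at hT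
      exact ⟨hM, hT⟩
  · intro M hM
    haveI : SigmaFinite M := hM.1.1
    exact tau_psi_comp hβα hp M
end
end

section
/- Let d ≥ 1 and let ρ(ds) = g(s) 1_{s>0} ds for a nonnegative measurable g, and suppose there exist δ ∈ (0,1), α ∈ (0,2) and 0 < a < b < ∞ with a < s^{α+1} g(s) < b for all s ∈ (0,δ), and that ∫₀^∞ s² g(s) ds < ∞. Then for every β ∈ [0,α), the range of Υ_ρ is contained in 𝔐^β: for every M ∈ 𝔇(Υ_ρ) one has ∫ (|x|² ∧ |x|^β) [Υ_ρ M](dx) < ∞. -/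
open MeasureTheory Set

noncomputable section

variable {E : Type*} [NormedAddCommGroup E] [NormedSpace ℝ E]
  [MeasurableSpace E] [BorelSpace E]

open ENNReal in
set_option maxHeartbeats 2000000 in
theorem stmt19 (d : ℕ) (hd : 1 ≤ d) (g : ℝ → ℝ) (hgmeas : Measurable g) (hg0 : ∀ s, 0 ≤ g s)
    (δ α a b : ℝ) (hδ : δ ∈ Ioo (0 : ℝ) 1) (hα : α ∈ Ioo (0 : ℝ) 2) (ha : 0 < a) (hab : a < b)
    (hbound : ∀ s ∈ Ioo (0 : ℝ) δ, a < s ^ (α + 1) * g s ∧ s ^ (α + 1) * g s < b)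
    (hint : ∫⁻ s in Ioi (0 : ℝ), ENNReal.ofReal (s ^ 2 * g s) < ⊤)
    (β : ℝ) (hβ0 : 0 ≤ β) (hβα : β < α) :
    ∀ M ∈ UpsilonDomain (E := EuclideanSpace ℝ (Fin d)) (densMeasure g),
      MemMAlpha β (Upsilon (densMeasure g) M) := by
  obtain ⟨hδ0, hδ1⟩ := hδ
  obtain ⟨hα0, hα2⟩ := hα
  intro M hM
  obtain ⟨⟨hMsf, hM0, hMlevy⟩, hUsf, hU0, hUlevy⟩ := hM
  refine ⟨hU0, ?_⟩
  haveI : SigmaFinite M := hMsf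
  set E := EuclideanSpace ℝ (Fin d)
  set ρ : Measure ℝ := densMeasure g with hρdef
  -- density of ρ
  set ρd : ℝ → ℝ≥0∞ := fun s => if 0 < s then ENNReal.ofReal (g s) else 0 with hρd_def
  have hρd : Measurable ρd := by
    apply Measurable.ite measurableSet_Ioi
    · exact ENNReal.measurable_ofReal.comp hgmeas
    · exact measurable_const
  have hρ_eq : ρ = (volume : Measure ℝ).withDensity ρd := rfl
  haveI hρsf : SigmaFinite ρ := by
    have : ρ = (volume : Measure ℝ).withDensity
        (fun s => ENNReal.ofReal (if 0 < s then g s else 0)) := by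
      rw [hρ_eq]; congr 1; funext s; by_cases h : 0 < s <;> simp [hρd_def, h]
    rw [this]; infer_instance
  -- the functions
  set F1 : E → ℝ≥0∞ := fun y => ENNReal.ofReal (min (‖y‖ ^ 2) 1) with hF1_def
  set Fβ : E → ℝ≥0∞ := fun y => ENNReal.ofReal (min (‖y‖ ^ 2) (‖y‖ ^ β)) with hFβ_def
  have hF1 : Measurable F1 := by
    exact ENNReal.measurable_ofReal.comp ((measurable_norm.pow_const 2).min measurable_const)
  have hFβ : Measurable Fβ := by
    exact ENNReal.measurable_ofReal.comp
      ((measurable_norm.pow_const 2).min (measurable_norm.pow_const β))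
  have hT : Measurable (fun sx : ℝ × E => sx.1 • sx.2) :=
    (continuous_fst.smul continuous_snd).measurable
  -- Step A: unfold Upsilon into iterated integrals
  have hmap : ∀ (F : E → ℝ≥0∞), Measurable F →
      ∫⁻ y, F y ∂(Upsilon ρ M) = ∫⁻ x, ∫⁻ s, F (s • x) ∂ρ ∂M := by
    intro F hF
    rw [Upsilon, lintegral_map hF hT]
    exact lintegral_prod_symm _ ((hF.comp hT).aemeasurable)
  -- constants
  set C2 : ℝ≥0∞ := ∫⁻ s in Ioi (0 : ℝ), ENNReal.ofReal (s ^ 2 * g s) with hC2_def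
  have hC2top : C2 ≠ ⊤ := hint.ne
  set R0 : ℝ := 2 / δ with hR0_def
  have hR0pos : 0 < R0 := by positivity
  have hR0one : 1 ≤ R0 := by
    rw [hR0_def, le_div_iff₀ hδ0]; linarith
  set a2 : ℝ := a * 2 ^ (-α - 1) with ha2_def
  have ha2pos : 0 < a2 := by
    have h2 : (0:ℝ) < 2 ^ (-α - 1) := Real.rpow_pos_of_pos two_pos _
    rw [ha2_def]; positivity
  set D : ℝ≥0∞ := ENNReal.ofReal (b / (α - β)) + ENNReal.ofReal (δ ^ (β - 2)) * C2 with hD_def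
  have hDtop : D ≠ ⊤ :=
    ENNReal.add_ne_top.2 ⟨ENNReal.ofReal_ne_top, ENNReal.mul_ne_top ENNReal.ofReal_ne_top hC2top⟩
  set c4 : ℝ≥0∞ := (ENNReal.ofReal a2)⁻¹ * D with hc4_def
  have hc4top : c4 ≠ ⊤ := by
    refine ENNReal.mul_ne_top ?_ hDtop
    rw [ENNReal.inv_ne_top]
    exact (ENNReal.ofReal_pos.2 ha2pos).ne'
  set c5 : ℝ≥0∞ := ENNReal.ofReal (R0 ^ 2) * C2 with hc5_def
  have hc5top : c5 ≠ ⊤ := ENNReal.mul_ne_top ENNReal.ofReal_ne_top hC2top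
  -- the key pointwise (in x) bound
  have key : ∀ x : E, (∫⁻ s, Fβ (s • x) ∂ρ) ≤
      (1 + c4) * (∫⁻ s, F1 (s • x) ∂ρ) + c5 * ENNReal.ofReal (min (‖x‖ ^ 2) 1) := by
    intro x
    obtain ⟨r, hrdef⟩ : ∃ r : ℝ, r = ‖x‖ := ⟨‖x‖, rfl⟩
    rw [← hrdef]
    have hr : 0 ≤ r := hrdef ▸ norm_nonneg x
    have hsx : Measurable (fun s : ℝ => s • x) :=
      (continuous_id.smul continuous_const).measurable
    have hsmul : ∀ s : ℝ, 0 < s → ‖s • x‖ = s * r := by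
      intro s hs
      rw [norm_smul, Real.norm_eq_abs, abs_of_pos hs, ← hrdef]
    have hρint : ∀ (F : E → ℝ≥0∞), Measurable F →
        ∫⁻ s, F (s • x) ∂ρ = ∫⁻ s, ρd s * F (s • x) ∂volume := by
      intro F hF
      rw [hρ_eq]
      exact lintegral_withDensity_eq_lintegral_mul volume hρd (hF.comp hsx)
    set Jf : ℝ → ℝ≥0∞ := fun s =>
      if 0 < s ∧ 1 < s * r then ENNReal.ofReal (g s * (s * r) ^ β) else 0 with hJf_def
    have hJfmeas : Measurable Jf := by
      apply Measurable.ite _ _ measurable_const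
      · exact (measurableSet_lt measurable_const measurable_id).inter
          (measurableSet_lt measurable_const (measurable_id.mul_const r))
      · exact ENNReal.measurable_ofReal.comp
          (hgmeas.mul ((measurable_id.mul_const r).pow_const β))
    have hIhm : Measurable fun s : ℝ => ρd s * F1 (s • x) := hρd.mul (hF1.comp hsx)
    have hm2 : Measurable (fun s : ℝ => ENNReal.ofReal (s ^ 2 * g s)) :=
      ((measurable_id.pow_const 2).mul hgmeas).ennreal_ofReal
    -- pointwise splitting
    have pw1 : ∀ s : ℝ, ρd s * Fβ (s • x) ≤ ρd s * F1 (s • x) + Jf s := by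
      intro s
      by_cases hs : 0 < s
      · have hn : ‖s • x‖ = s * r := hsmul s hs
        by_cases h1 : 1 < s * r
        · refine le_trans ?_ (self_le_add_left _ _)
          simp only [hρd_def, if_pos hs, hJf_def, if_pos (And.intro hs h1), hFβ_def]
          rw [← ENNReal.ofReal_mul (hg0 s)]
          apply ENNReal.ofReal_le_ofReal
          apply mul_le_mul_of_nonneg_left _ (hg0 s)
          rw [hn]
          exact min_le_right _ _
        · have h2 : (s * r) ^ 2 ≤ 1 := by
            have h3 := not_lt.mp h1
            have h4 : 0 ≤ s * r := mul_nonneg hs.le hr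
            nlinarith
          refine le_trans ?_ (self_le_add_right _ _)
          apply mul_le_mul_right
          simp only [hFβ_def, hF1_def]
          apply ENNReal.ofReal_le_ofReal
          rw [hn]
          exact le_min (min_le_left _ _) ((min_le_left _ _).trans h2)
      · simp [hρd_def, if_neg hs]
    have hsplit : ∫⁻ s, ρd s * Fβ (s • x) ∂volume ≤
        (∫⁻ s, ρd s * F1 (s • x) ∂volume) + ∫⁻ s, Jf s ∂volume := by
      rw [← lintegral_add_left hIhm]
      exact lintegral_mono pw1
    -- first bound on Jf, valid for all r
    have hJ1 : ∫⁻ s, Jf s ∂volume ≤ ENNReal.ofReal (r ^ 2) * C2 := by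
      have pw : ∀ s : ℝ, Jf s ≤ ENNReal.ofReal (r ^ 2) *
          (Ioi (0:ℝ)).indicator (fun s => ENNReal.ofReal (s ^ 2 * g s)) s := by
        intro s
        simp only [hJf_def]
        by_cases h : 0 < s ∧ 1 < s * r
        · obtain ⟨hs, h1⟩ := h
          rw [if_pos (And.intro hs h1)]
          have h2 : (s * r) ^ β ≤ (s * r) ^ (2:ℕ) := by
            rw [← Real.rpow_natCast (s*r) 2]
            exact Real.rpow_le_rpow_of_exponent_le h1.le (by push_cast; linarith)
          have h3 : g s * (s * r) ^ β ≤ r ^ 2 * (s ^ 2 * g s) := by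
            calc g s * (s * r) ^ β ≤ g s * (s * r) ^ (2:ℕ) :=
                  mul_le_mul_of_nonneg_left h2 (hg0 s)
              _ = r ^ 2 * (s ^ 2 * g s) := by ring
          rw [Set.indicator_of_mem (mem_Ioi.2 hs), ← ENNReal.ofReal_mul (by positivity)]
          exact ENNReal.ofReal_le_ofReal h3
        · rw [if_neg h]; exact zero_le
      calc ∫⁻ s, Jf s ∂volume ≤ ∫⁻ s, ENNReal.ofReal (r ^ 2) *
            (Ioi (0:ℝ)).indicator (fun s => ENNReal.ofReal (s ^ 2 * g s)) s ∂volume :=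
            lintegral_mono pw
        _ = ENNReal.ofReal (r ^ 2) * C2 := by
            rw [lintegral_const_mul _ (hm2.indicator measurableSet_Ioi),
              lintegral_indicator measurableSet_Ioi, hC2_def]
    -- second bound on Jf, valid for r > R0
    have hJ2 : R0 < r → ∫⁻ s, Jf s ∂volume ≤ c4 * ∫⁻ s, ρd s * F1 (s • x) ∂volume := by
      intro hrR
      have hr0 : 0 < r := lt_trans hR0pos hrR
      have hr1 : 1 ≤ r := le_trans hR0one hrR.le
      have h1r : 0 < 1 / r := by positivity
      -- pointwise bound by two indicator pieces
      have pwJ : ∀ s : ℝ, Jf s ≤ ENNReal.ofReal (r ^ β) *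
          ((Ioi (1/r)).indicator (fun s => ENNReal.ofReal (b * s ^ (β - α - 1))) s
           + (Ioi (0:ℝ)).indicator
              (fun s => ENNReal.ofReal (δ ^ (β - 2) * (s ^ 2 * g s))) s) := by
        intro s
        simp only [hJf_def]
        by_cases h : 0 < s ∧ 1 < s * r
        · obtain ⟨hs, h1⟩ := h
          rw [if_pos (And.intro hs h1)]
          have hs1r : 1 / r < s := by
            rw [div_lt_iff₀ hr0]; linarith [h1]
          have hmul : g s * (s * r) ^ β = (g s * s ^ β) * r ^ β := by
            rw [Real.mul_rpow hs.le hr]; ring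
          by_cases hsδ : s < δ
          · have hb2 := (hbound s ⟨hs, hsδ⟩).2
            have hspow : (0:ℝ) < s ^ (α+1:ℝ) := Real.rpow_pos_of_pos hs _
            have hgb : g s ≤ b * (s ^ (α+1:ℝ))⁻¹ := by
              calc g s = (s ^ (α+1:ℝ) * g s) * (s ^ (α+1:ℝ))⁻¹ := by field_simp
                _ ≤ b * (s ^ (α+1:ℝ))⁻¹ :=
                    mul_le_mul_of_nonneg_right hb2.le (by positivity)
            have hup : g s * s ^ β ≤ b * s ^ (β - α - 1) := by
              calc g s * s ^ β ≤ (b * (s ^ (α+1:ℝ))⁻¹) * s ^ β :=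
                    mul_le_mul_of_nonneg_right hgb (Real.rpow_nonneg hs.le β)
                _ = b * s ^ (-(α+1) + β) := by
                    rw [← Real.rpow_neg hs.le, mul_assoc, ← Real.rpow_add hs]
                _ = b * s ^ (β - α - 1) := by ring_nf
            refine le_trans ?_ (mul_le_mul_right (self_le_add_right _ _) _)
            rw [Set.indicator_of_mem (mem_Ioi.2 hs1r), hmul,
              ← ENNReal.ofReal_mul (by positivity), mul_comm (r ^ β)]
            apply ENNReal.ofReal_le_ofReal
            exact mul_le_mul_of_nonneg_right hup (Real.rpow_nonneg hr β)
          · have hsδ' : δ ≤ s := not_lt.mp hsδ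
            have h4 : s ^ (β - 2:ℝ) ≤ δ ^ (β - 2:ℝ) :=
              Real.rpow_le_rpow_of_nonpos hδ0 hsδ' (by linarith)
            have hup : g s * s ^ β ≤ δ ^ (β - 2:ℝ) * (s ^ 2 * g s) := by
              have h5 : s ^ (β:ℝ) = s ^ (β - 2:ℝ) * s ^ (2:ℕ) := by
                rw [← Real.rpow_natCast s 2, ← Real.rpow_add hs]
                norm_num
              calc g s * s ^ β = (s ^ (β - 2:ℝ) * s ^ (2:ℕ)) * g s := by rw [← h5]; ring
                _ ≤ (δ ^ (β - 2:ℝ) * s ^ (2:ℕ)) * g s := by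
                    apply mul_le_mul_of_nonneg_right _ (hg0 s)
                    exact mul_le_mul_of_nonneg_right h4 (by positivity)
                _ = δ ^ (β - 2:ℝ) * (s ^ 2 * g s) := by ring
            refine le_trans ?_ (mul_le_mul_right (self_le_add_left _ _) _)
            rw [Set.indicator_of_mem (mem_Ioi.2 hs), hmul,
              ← ENNReal.ofReal_mul (by positivity), mul_comm (r ^ β)]
            apply ENNReal.ofReal_le_ofReal
            exact mul_le_mul_of_nonneg_right hup (Real.rpow_nonneg hr β)
        · rw [if_neg h]; exact zero_le
      have hAmeas : Measurable (fun s : ℝ => ENNReal.ofReal (b * s ^ (β - α - 1))) :=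
        ((measurable_id.pow_const _).const_mul b).ennreal_ofReal
      have hBmeas : Measurable
          (fun s : ℝ => ENNReal.ofReal (δ ^ (β - 2) * (s ^ 2 * g s))) :=
        (((measurable_id.pow_const 2).mul hgmeas).const_mul _).ennreal_ofReal
      have hJint : ∫⁻ s, Jf s ∂volume ≤ ENNReal.ofReal (r ^ β) *
          ((∫⁻ s in Ioi (1/r), ENNReal.ofReal (b * s ^ (β - α - 1)) ∂volume)
           + ∫⁻ s in Ioi (0:ℝ), ENNReal.ofReal (δ ^ (β - 2) * (s ^ 2 * g s)) ∂volume) := by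
        refine (lintegral_mono pwJ).trans_eq ?_
        rw [lintegral_const_mul' _ _ ENNReal.ofReal_ne_top,
          lintegral_add_left (hAmeas.indicator measurableSet_Ioi),
          lintegral_indicator measurableSet_Ioi, lintegral_indicator measurableSet_Ioi]
      have hexp : β - α - 1 < -1 := by linarith
      have hIA : ∫⁻ s in Ioi (1/r), ENNReal.ofReal (b * s ^ (β - α - 1)) ∂volume
          = ENNReal.ofReal (b / (α - β) * r ^ (α - β)) := by
        rw [← ofReal_integral_eq_lintegral_ofReal
            ((integrableOn_Ioi_rpow_of_lt hexp h1r).const_mul b)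
            ((ae_restrict_iff' measurableSet_Ioi).2 (Filter.Eventually.of_forall
              (fun s hs => by
                have hs0 : 0 < s := lt_trans h1r hs
                exact mul_nonneg (le_of_lt (lt_trans ha hab))
                  (Real.rpow_nonneg hs0.le (β - α - 1)))))]
        congr 1
        rw [integral_const_mul, integral_Ioi_rpow_of_lt hexp h1r]
        have e1 : β - α - 1 + 1 = β - α := by ring
        rw [e1, one_div, Real.inv_rpow hr, ← Real.rpow_neg hr, neg_sub]
        have hne : α - β ≠ 0 := by linarith
        have hne2 : β - α ≠ 0 := by linarith
        field_simp
        ring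
      have hIB : ∫⁻ s in Ioi (0:ℝ), ENNReal.ofReal (δ ^ (β - 2) * (s ^ 2 * g s)) ∂volume
          = ENNReal.ofReal (δ ^ (β - 2)) * C2 := by
        rw [hC2_def, ← lintegral_const_mul _ hm2]
        congr 1
        funext s
        rw [← ENNReal.ofReal_mul (Real.rpow_nonneg hδ0.le _)]
      have hJD : ∫⁻ s, Jf s ∂volume ≤ ENNReal.ofReal (r ^ α) * D := by
        refine hJint.trans ?_
        rw [hIA, hIB, hD_def, mul_add, mul_add]
        apply add_le_add
        · rw [← ENNReal.ofReal_mul (Real.rpow_nonneg hr β),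
            mul_comm (ENNReal.ofReal (r ^ α)),
            ← ENNReal.ofReal_mul (div_nonneg (le_of_lt (lt_trans ha hab)) (by linarith))]
          apply ENNReal.ofReal_le_ofReal
          rw [show r ^ β * (b / (α - β) * r ^ (α - β))
              = b / (α - β) * (r ^ β * r ^ (α - β)) by ring,
            ← Real.rpow_add hr0, show β + (α - β) = α by ring]
        · rw [← mul_assoc, ← mul_assoc]
          apply mul_le_mul_left
          apply mul_le_mul_left
          exact ENNReal.ofReal_le_ofReal
            (Real.rpow_le_rpow_of_exponent_le hr1 hβα.le)
      -- lower bound on the F1 integral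
      have h2rδ : 2 / r < δ := by
        rw [div_lt_iff₀ hr0]
        rw [hR0_def, div_lt_iff₀ hδ0] at hrR
        linarith
      have hlow : ENNReal.ofReal a2 * ENNReal.ofReal (r ^ α)
          ≤ ∫⁻ s, ρd s * F1 (s • x) ∂volume := by
        have hsub : ∀ s ∈ Ioo (1/r) (2/r),
            ENNReal.ofReal (a * (2/r) ^ (-α-1:ℝ)) ≤ ρd s * F1 (s • x) := by
          intro s hsm
          obtain ⟨hs1, hs2⟩ := hsm
          have hs : 0 < s := lt_trans h1r hs1
          have hsr1 : 1 < s * r := by rwa [div_lt_iff₀ hr0] at hs1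
          have hsδ : s < δ := lt_trans hs2 h2rδ
          have hn : ‖s • x‖ = s * r := hsmul s hs
          have hF1eq : F1 (s • x) = 1 := by
            simp only [hF1_def]
            rw [hn, min_eq_right (by nlinarith), ENNReal.ofReal_one]
          rw [hF1eq, mul_one]
          simp only [hρd_def, if_pos hs]
          apply ENNReal.ofReal_le_ofReal
          have hb1 := (hbound s ⟨hs, hsδ⟩).1
          have hspow : (0:ℝ) < s ^ (α+1:ℝ) := Real.rpow_pos_of_pos hs _
          have hga : a * s ^ (-(α+1):ℝ) ≤ g s := by
            rw [Real.rpow_neg hs.le]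
            calc a * (s ^ (α+1:ℝ))⁻¹ ≤ (s ^ (α+1:ℝ) * g s) * (s ^ (α+1:ℝ))⁻¹ :=
                  mul_le_mul_of_nonneg_right hb1.le (by positivity)
              _ = g s := by field_simp
          refine le_trans ?_ hga
          apply mul_le_mul_of_nonneg_left _ ha.le
          have h2r0 : (0:ℝ) < 2 / r := by positivity
          have := Real.rpow_le_rpow_of_nonpos hs hs2.le (show (-α-1:ℝ) ≤ 0 by linarith)
          calc (2/r) ^ (-α-1:ℝ) ≤ s ^ (-α-1:ℝ) := this
            _ = s ^ (-(α+1):ℝ) := by ring_nf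
        have hvol : (volume (Ioo (1/r) (2/r)) : ℝ≥0∞) = ENNReal.ofReal (1/r) := by
          rw [Real.volume_Ioo]
          congr 1
          field_simp
          ring
        have hkey : a * (2/r) ^ (-α-1:ℝ) * (1/r) = a2 * r ^ α := by
          have h2r0 : (0:ℝ) < 2 / r := by positivity
          have he : (2/r:ℝ) ^ (-α-1:ℝ) = 2 ^ (-α-1:ℝ) * (r ^ (-α-1:ℝ))⁻¹ := by
            rw [div_eq_mul_inv, Real.mul_rpow (by norm_num) (inv_nonneg.mpr hr),
              Real.inv_rpow hr]
          rw [he, ha2_def]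
          rw [show (r:ℝ) ^ (-α-1:ℝ) = (r ^ (α+1:ℝ))⁻¹ by
            rw [← Real.rpow_neg hr]; ring_nf]
          rw [inv_inv, show (r:ℝ) ^ (α+1:ℝ) = r ^ (α:ℝ) * r by
            rw [Real.rpow_add hr0, Real.rpow_one]]
          field_simp
        calc ENNReal.ofReal a2 * ENNReal.ofReal (r ^ α)
            = ENNReal.ofReal (a * (2/r) ^ (-α-1:ℝ)) * ENNReal.ofReal (1/r) := by
              rw [← ENNReal.ofReal_mul (by positivity), ← ENNReal.ofReal_mul
                (mul_nonneg ha.le (Real.rpow_nonneg (by positivity) _)), hkey]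
          _ = ∫⁻ _ in Ioo (1/r) (2/r), ENNReal.ofReal (a * (2/r) ^ (-α-1:ℝ)) ∂volume := by
              rw [setLIntegral_const, hvol]
          _ ≤ ∫⁻ s in Ioo (1/r) (2/r), ρd s * F1 (s • x) ∂volume :=
              setLIntegral_mono hIhm hsub
          _ ≤ ∫⁻ s, ρd s * F1 (s • x) ∂volume := setLIntegral_le_lintegral _ _
      have h3 : ENNReal.ofReal (r ^ α) ≤
          (ENNReal.ofReal a2)⁻¹ * ∫⁻ s, ρd s * F1 (s • x) ∂volume := by
        have h4 := mul_le_mul_right hlow (ENNReal.ofReal a2)⁻¹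
        rwa [← mul_assoc, ENNReal.inv_mul_cancel (ENNReal.ofReal_pos.2 ha2pos).ne'
          ENNReal.ofReal_ne_top, one_mul] at h4
      calc ∫⁻ s, Jf s ∂volume ≤ ENNReal.ofReal (r ^ α) * D := hJD
        _ ≤ ((ENNReal.ofReal a2)⁻¹ * ∫⁻ s, ρd s * F1 (s • x) ∂volume) * D :=
            mul_le_mul_left h3 _
        _ = c4 * ∫⁻ s, ρd s * F1 (s • x) ∂volume := by
            rw [hc4_def]; ring
    -- combine
    rw [hρint Fβ hFβ, hρint F1 hF1]
    refine hsplit.trans ?_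
    by_cases hrR : R0 < r
    · calc (∫⁻ s, ρd s * F1 (s • x) ∂volume) + ∫⁻ s, Jf s ∂volume
          ≤ (∫⁻ s, ρd s * F1 (s • x) ∂volume)
            + c4 * ∫⁻ s, ρd s * F1 (s • x) ∂volume := add_le_add le_rfl (hJ2 hrR)
        _ = (1 + c4) * ∫⁻ s, ρd s * F1 (s • x) ∂volume := by rw [add_mul, one_mul]
        _ ≤ _ := self_le_add_right _ _
    · have hrle : r ≤ R0 := not_lt.mp hrR
      have hmin : r ^ 2 ≤ R0 ^ 2 * min (r ^ 2) 1 := by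
        rcases le_total r 1 with h | h
        · rw [min_eq_left (by nlinarith)]
          have h1 : (1:ℝ) ≤ R0 ^ 2 := by nlinarith
          nlinarith [mul_nonneg (sub_nonneg.mpr h1) (sq_nonneg r)]
        · rw [min_eq_right (by nlinarith)]
          nlinarith
      have hJ5 : ∫⁻ s, Jf s ∂volume ≤ c5 * ENNReal.ofReal (min (r ^ 2) 1) := by
        refine hJ1.trans ?_
        rw [hc5_def, mul_comm (ENNReal.ofReal (R0 ^ 2)) C2, mul_assoc,
          mul_comm C2 (ENNReal.ofReal (R0^2) * _)]
        apply mul_le_mul_left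
        rw [← ENNReal.ofReal_mul (by positivity)]
        exact ENNReal.ofReal_le_ofReal hmin
      calc (∫⁻ s, ρd s * F1 (s • x) ∂volume) + ∫⁻ s, Jf s ∂volume
          ≤ (1 + c4) * (∫⁻ s, ρd s * F1 (s • x) ∂volume)
            + c5 * ENNReal.ofReal (min (r ^ 2) 1) := by
            apply add_le_add _ hJ5
            exact le_mul_of_one_le_left' (self_le_add_right _ _)
        _ = _ := rfl
  -- conclude
  have hmeasIh : Measurable fun x : E => ∫⁻ s, F1 (s • x) ∂ρ := by
    apply Measurable.lintegral_prod_right (f := fun (x : E) (s : ℝ) => F1 (s • x))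
    exact hF1.comp (continuous_snd.smul continuous_fst).measurable
  have hIh : ∫⁻ x, (∫⁻ s, F1 (s • x) ∂ρ) ∂M < ⊤ := by
    rw [← hmap F1 hF1]; exact hUlevy
  calc ∫⁻ y, ENNReal.ofReal (min (‖y‖ ^ 2) (‖y‖ ^ β)) ∂(Upsilon ρ M)
      = ∫⁻ x, ∫⁻ s, Fβ (s • x) ∂ρ ∂M := hmap Fβ hFβ
    _ ≤ ∫⁻ x, ((1 + c4) * (∫⁻ s, F1 (s • x) ∂ρ)
          + c5 * ENNReal.ofReal (min (‖x‖ ^ 2) 1)) ∂M := lintegral_mono key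
    _ = (1 + c4) * (∫⁻ x, (∫⁻ s, F1 (s • x) ∂ρ) ∂M)
          + c5 * ∫⁻ x, ENNReal.ofReal (min (‖x‖ ^ 2) 1) ∂M := by
        rw [lintegral_add_left (hmeasIh.const_mul _), lintegral_const_mul _ hmeasIh,
          lintegral_const_mul]
        exact ENNReal.measurable_ofReal.comp
          ((measurable_norm.pow_const 2).min measurable_const)
    _ < ⊤ := by
        apply ENNReal.add_lt_top.2
        constructor
        · exact ENNReal.mul_lt_top (by simp [ENNReal.add_lt_top, hc4top.lt_top]) hIh
        · exact ENNReal.mul_lt_top hc5top.lt_top hMlevy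
end
end
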